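/- Let p > 1, 1/p + 1/q = 1, 0 < λ < 1, r, s > 0 with r + s = λ. Let f, g : (0,∞) → [0,∞) be measurable with 0 < ∫₀^∞ f^p < ∞, 0 < ∫₀^∞ g^q < ∞, and F(x) = ∫₀^x f, G(y) = ∫₀^y g. Then ∫₀^∞ ∫₀^∞ x^{r-1/q-1} y^{s-1/p-1} F(x) G(y) / |x-y|^λ dx dy ≤ pq (B(r,1-λ) + B(s,1-λ)) (∫₀^∞ f^p)^{1/p} (∫₀^∞ g^q)^{1/q}. -/

import Mathlib

open MeasureTheory Set

open ENNReal

noncomputable def betaFn (a b : ℝ) : ℝ := ∫ t in (0:ℝ)..1, t ^ (a - 1) * (1 - t) ^ (b - 1)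

lemma betaFn_nonneg (a b : ℝ) : 0 ≤ betaFn a b := by
  apply intervalIntegral.integral_nonneg zero_le_one
  intro u hu
  exact mul_nonneg (Real.rpow_nonneg hu.1 _) (Real.rpow_nonneg (by linarith [hu.2]) _)

lemma betaIntegrable {a b : ℝ} (ha : 0 < a) (hb : 0 < b) :
    IntervalIntegrable (fun t : ℝ => t ^ (a - 1) * (1 - t) ^ (b - 1)) volume 0 1 := by
  have hcont : ∀ c d : ℝ, (0:ℝ) < c → ContinuousOn (fun t : ℝ => (1 - t) ^ (b - 1)) (Icc c d) →
      True := fun _ _ _ _ => trivial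
  have left : IntervalIntegrable (fun t : ℝ => t ^ (a - 1) * (1 - t) ^ (b - 1)) volume 0 (1/2) := by
    apply (intervalIntegral.intervalIntegrable_rpow' (by linarith : (-1:ℝ) < a - 1)).mul_continuousOn
    intro t ht
    rw [uIcc_of_le (by norm_num : (0:ℝ) ≤ 1/2)] at ht
    apply ContinuousAt.continuousWithinAt
    apply ContinuousAt.rpow_const (by fun_prop)
    left; intro h; have := ht.2; norm_num at h; linarith
  have right : IntervalIntegrable (fun t : ℝ => t ^ (a - 1) * (1 - t) ^ (b - 1)) volume (1/2) 1 := by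
    have base : IntervalIntegrable (fun t : ℝ => (1 - t) ^ (b - 1)) volume (1/2) 1 := by
      have := (intervalIntegral.intervalIntegrable_rpow'
        (by linarith : (-1:ℝ) < b - 1) (a := 0) (b := 1/2)).comp_sub_left 1
      norm_num at this
      exact this.symm
    apply base.continuousOn_mul
    intro t ht
    rw [uIcc_of_le (by norm_num : (1/2:ℝ) ≤ 1)] at ht
    apply ContinuousAt.continuousWithinAt
    apply ContinuousAt.rpow_const (by fun_prop)
    left; intro h; have := ht.1; rw [h] at this; norm_num at this
  exact left.trans right

lemma lint_beta {a b : ℝ} (ha : 0 < a) (hb : 0 < b) :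
    ∫⁻ t in Ioo (0:ℝ) 1, ENNReal.ofReal (t ^ (a-1) * (1-t) ^ (b-1)) = ENNReal.ofReal (betaFn a b) := by
  have hInt : IntegrableOn (fun t : ℝ => t ^ (a-1) * (1-t) ^ (b-1)) (Ioo 0 1) := by
    have := betaIntegrable ha hb
    rwa [intervalIntegrable_iff_integrableOn_Ioo_of_le zero_le_one] at this
  rw [← ofReal_integral_eq_lintegral_ofReal hInt]
  · congr 1
    rw [betaFn, intervalIntegral.integral_of_le zero_le_one, integral_Ioc_eq_integral_Ioo]
  · filter_upwards [ae_restrict_mem measurableSet_Ioo] with t ht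
    exact mul_nonneg (Real.rpow_nonneg ht.1.le _) (Real.rpow_nonneg (by linarith [ht.2]) _)

lemma lint_image_deriv {s : Set ℝ} {f f' : ℝ → ℝ} (hs : MeasurableSet s)
    (hf' : ∀ x ∈ s, HasDerivWithinAt f (f' x) s x) (hf : InjOn f s) (g : ℝ → ℝ≥0∞) :
    ∫⁻ x in f '' s, g x = ∫⁻ x in s, ENNReal.ofReal |f' x| * g (f x) := by
  simpa only [ContinuousLinearMap.det_toSpanSingleton] using
    lintegral_image_eq_lintegral_abs_det_fderiv_mul volume hs
      (fun x hx => (hf' x hx).hasFDerivWithinAt) hf g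

lemma lint_rpow_Ioo {c x : ℝ} (hc : -1 < c) (hx : 0 < x) :
    ∫⁻ t in Ioo (0:ℝ) x, ENNReal.ofReal (t ^ c) = ENNReal.ofReal (x ^ (c+1) / (c+1)) := by
  have hInt : IntegrableOn (fun t : ℝ => t ^ c) (Ioo 0 x) := by
    have := (intervalIntegral.intervalIntegrable_rpow' (a := 0) (b := x) hc)
    rw [intervalIntegrable_iff_integrableOn_Ioo_of_le hx.le] at this
    exact this
  rw [← ofReal_integral_eq_lintegral_ofReal hInt]
  · congr 1
    rw [← integral_Ioc_eq_integral_Ioo, ← intervalIntegral.integral_of_le hx.le,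
      integral_rpow (Or.inl hc), Real.zero_rpow (by linarith), sub_zero]
  · filter_upwards [ae_restrict_mem measurableSet_Ioo] with t ht
    exact Real.rpow_nonneg ht.1.le c

lemma lint_rpow_Ioi {c x : ℝ} (hc : c < -1) (hx : 0 < x) :
    ∫⁻ t in Ioi x, ENNReal.ofReal (t ^ c) = ENNReal.ofReal (x ^ (c+1) / (-(c+1))) := by
  rw [← ofReal_integral_eq_lintegral_ofReal (integrableOn_Ioi_rpow_of_lt hc hx)]
  · rw [integral_Ioi_rpow_of_lt hc hx]; rw [div_neg, ← neg_div]
  · filter_upwards [ae_restrict_mem measurableSet_Ioi] with t ht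
    exact Real.rpow_nonneg (hx.le.trans ht.le) c

lemma kernel_meas {σ lam : ℝ} (x : ℝ) :
    Measurable (fun t : ℝ => ENNReal.ofReal (t ^ (σ-1) * |x - t| ^ (-lam))) := by
  apply Measurable.ennreal_ofReal
  exact (measurable_id.pow measurable_const).mul (((measurable_const.sub measurable_id).abs).pow measurable_const)

lemma lint_kernel_Ioi1 {σ lam : ℝ} (hσ : 0 < σ) (hsl : σ < lam) (hlam1 : lam < 1) :
    ∫⁻ t in Ioi (1:ℝ), ENNReal.ofReal (t ^ (σ-1) * |1 - t| ^ (-lam))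
      = ENNReal.ofReal (betaFn (lam - σ) (1 - lam)) := by
  have himg : (fun u : ℝ => u⁻¹) '' Ioo 0 1 = Ioi 1 := by
    have := Set.inv_Ioo_0_left (a := (1:ℝ)) one_pos
    simpa [Set.image_inv] using this
  rw [← himg, lint_image_deriv measurableSet_Ioo
      (fun u hu => ((hasDerivAt_inv (ne_of_gt hu.1)).hasDerivWithinAt))
      (fun u _ v _ h => inv_injective h)]
  rw [← lint_beta (by linarith : (0:ℝ) < lam - σ) (by linarith : (0:ℝ) < 1 - lam)]
  apply setLIntegral_congr_fun measurableSet_Ioo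
  intro u hu
  beta_reduce
  have hu0 : (0:ℝ) < u := hu.1
  have hu1 : u < 1 := hu.2
  have h1u : (0:ℝ) < 1 - u := by linarith
  have habs : |1 - u⁻¹| = (1-u) * u⁻¹ := by
    rw [abs_of_nonpos (by
      have : (1:ℝ) < u⁻¹ := (one_lt_inv_iff₀).mpr ⟨hu0, hu1⟩
      linarith)]
    field_simp
    ring
  have hder : |(-(u^2)⁻¹ : ℝ)| = (u^2)⁻¹ := by rw [abs_neg]; exact abs_of_pos (by positivity)
  rw [hder, habs, ← ENNReal.ofReal_mul (by positivity)]
  congr 1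
  rw [Real.mul_rpow h1u.le (by positivity), Real.inv_rpow hu0.le, Real.inv_rpow hu0.le,
    ← Real.rpow_neg hu0.le, ← Real.rpow_neg hu0.le, neg_neg,
    ← Real.rpow_natCast u 2, ← Real.rpow_neg hu0.le]
  push_cast
  rw [show ((-2:ℝ)) = -2 from rfl]
  have : (u ^ (-2:ℝ)) * (u ^ (-(σ-1)) * ((1-u) ^ (-lam) * u ^ lam))
      = u ^ ((-2) + (-(σ-1)) + lam) * (1-u)^(-lam) := by
    rw [Real.rpow_add hu0, Real.rpow_add hu0]; ring
  rw [this]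
  have he : (-2) + (-(σ-1)) + lam = lam - σ - 1 := by ring
  rw [he]
  have he2 : (1:ℝ) - lam - 1 = -lam := by ring
  rw [he2]

lemma kernel_scale {σ lam x : ℝ} (hx : 0 < x) :
    ∫⁻ y in Ioi (0:ℝ), ENNReal.ofReal (y ^ (σ-1) * |x - y| ^ (-lam))
      = ENNReal.ofReal (x ^ (σ-lam)) *
        ∫⁻ t in Ioi (0:ℝ), ENNReal.ofReal (t ^ (σ-1) * |1 - t| ^ (-lam)) := by
  have himg : (fun t : ℝ => x * t) '' Ioi 0 = Ioi 0 := image_const_mul_Ioi_zero hx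
  conv_lhs => rw [← himg, lint_image_deriv measurableSet_Ioi
      (fun t _ => by simpa using ((hasDerivAt_id t).const_mul x).hasDerivWithinAt)
      (fun u _ v _ h => mul_left_cancel₀ hx.ne' h)]
  rw [← lintegral_const_mul _ (kernel_meas (σ := σ) (lam := lam) 1)]
  apply setLIntegral_congr_fun measurableSet_Ioi
  intro t ht
  beta_reduce
  have ht0 : (0:ℝ) < t := ht
  rw [abs_of_pos hx, ← ENNReal.ofReal_mul hx.le, ← ENNReal.ofReal_mul (Real.rpow_nonneg hx.le _)]
  congr 1
  rw [Real.mul_rpow hx.le ht0.le]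
  have habs : |x - x * t| = x * |1 - t| := by
    rw [show x - x * t = x * (1 - t) by ring, abs_mul, abs_of_pos hx]
  rw [habs, Real.mul_rpow hx.le (abs_nonneg _)]
  have hcollect : x * (x ^ (σ-1) * t ^ (σ-1) * (x ^ (-lam) * |1-t| ^ (-lam)))
      = (x ^ (1:ℝ) * x ^ (σ-1) * x ^ (-lam)) * (t ^ (σ-1) * |1-t| ^ (-lam)) := by
    rw [Real.rpow_one]; ring
  rw [hcollect, ← Real.rpow_add hx, ← Real.rpow_add hx]
  ring_nf

lemma lint_kernel {σ lam : ℝ} (hσ : 0 < σ) (hsl : σ < lam) (hlam1 : lam < 1) {x : ℝ} (hx : 0 < x) :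
    ∫⁻ y in Ioi (0:ℝ), ENNReal.ofReal (y ^ (σ-1) * |x - y| ^ (-lam))
      = ENNReal.ofReal (x ^ (σ-lam)) *
        ENNReal.ofReal (betaFn σ (1-lam) + betaFn (lam-σ) (1-lam)) := by
  rw [kernel_scale hx]
  congr 1
  have hsplit : (Ioi (0:ℝ)) = Ioo 0 1 ∪ Ici 1 := (Ioo_union_Ici_eq_Ioi zero_lt_one).symm
  rw [hsplit, lintegral_union measurableSet_Ici
    (Set.disjoint_left.mpr fun a ha hb => absurd ha.2 (not_lt.mpr hb))]
  have h2 : (volume : Measure ℝ).restrict (Ici (1:ℝ)) = volume.restrict (Ioi 1) :=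
    Measure.restrict_congr_set Ioi_ae_eq_Ici.symm
  rw [h2, lint_kernel_Ioi1 hσ hsl hlam1]
  have h1 : ∫⁻ t in Ioo (0:ℝ) 1, ENNReal.ofReal (t ^ (σ-1) * |1 - t| ^ (-lam))
      = ENNReal.ofReal (betaFn σ (1-lam)) := by
    rw [← lint_beta hσ (by linarith : (0:ℝ) < 1 - lam)]
    apply setLIntegral_congr_fun measurableSet_Ioo
    intro t ht
    beta_reduce
    rw [abs_of_pos (by linarith [ht.2] : (0:ℝ) < 1 - t)]
    norm_num
  rw [h1, ← ENNReal.ofReal_add (betaFn_nonneg _ _) (betaFn_nonneg _ _)]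

lemma hardy (p q : ℝ) (hp : 1 < p) (hpq : 1/p + 1/q = 1)
    (f : ℝ → ℝ) (hf_meas : Measurable f) (hf_nonneg : ∀ x, 0 ≤ f x) :
    ∫⁻ x in Ioi (0:ℝ), ENNReal.ofReal (x ^ (-p)) * (∫⁻ t in Ioo (0:ℝ) x, ENNReal.ofReal (f t)) ^ p
      ≤ ENNReal.ofReal (q ^ p) * ∫⁻ t in Ioi (0:ℝ), ENNReal.ofReal (f t ^ p) := by
  have hpc : Real.HolderConjugate p q := Real.holderConjugate_iff.mpr ⟨hp, by rw [← one_div, ← one_div]; exact hpq⟩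
  have hq : 1 < q := hpc.symm.lt
  have hp0 : 0 < p := by linarith
  have hq0 : 0 < q := by linarith
  have hp1 : 0 < 1/p := by positivity
  have hq1 : 0 < 1/q := by positivity
  have hqinv : 1/q = 1 - 1/p := by linarith
  have hpq' : (1/q) * p = p - 1 := by
    rw [hqinv, sub_mul, one_mul, one_div, inv_mul_cancel₀ hp0.ne']
  set e : ℝ := -p + (p-1)/q with he_def
  have he1 : e + 1 = -(1/q) := by
    have h2 : (p-1)/q = 1/q * p - 1/q := by ring
    rw [he_def, h2, hpq']; linarith
  have he : e < -1 := by
    have : e + 1 < 0 := by rw [he1]; linarith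
    linarith
  set c : ℝ → ℝ≥0∞ := fun t => ENNReal.ofReal (f t ^ p * t ^ (1/q)) with hc
  have hc_meas : Measurable c :=
    ((hf_meas.pow measurable_const).mul (measurable_id.pow measurable_const)).ennreal_ofReal
  set A : ℝ → ℝ≥0∞ := fun x => ∫⁻ t in Ioo (0:ℝ) x, c t with hA
  set α : ℝ := 1/(p*q) with hα
  have hαp : α * p = 1/q := by rw [hα]; field_simp
  have hαq : -α * q = -(1/p) := by rw [hα]; field_simp
  -- pointwise bound
  have key : ∀ x ∈ Ioi (0:ℝ),
      ENNReal.ofReal (x ^ (-p)) * (∫⁻ t in Ioo (0:ℝ) x, ENNReal.ofReal (f t)) ^ p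
        ≤ ENNReal.ofReal (q ^ (p-1)) * (ENNReal.ofReal (x ^ e) * A x) := by
    intro x hx
    have hx0 : (0:ℝ) < x := hx
    have h1 : ∫⁻ t in Ioo (0:ℝ) x, ENNReal.ofReal (f t)
        = ∫⁻ t in Ioo (0:ℝ) x,
            ((fun t => ENNReal.ofReal (f t * t ^ α))
              * (fun t => ENNReal.ofReal (t ^ (-α)))) t := by
      apply setLIntegral_congr_fun measurableSet_Ioo
      intro t ht
      beta_reduce
      simp only [Pi.mul_apply]
      rw [← ENNReal.ofReal_mul (mul_nonneg (hf_nonneg t) (Real.rpow_nonneg ht.1.le _))]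
      congr 1
      rw [mul_assoc, ← Real.rpow_add ht.1, add_neg_cancel, Real.rpow_zero, mul_one]
    have hm1 : AEMeasurable (fun t : ℝ => ENNReal.ofReal (f t * t ^ α))
        (volume.restrict (Ioo (0:ℝ) x)) :=
      ((hf_meas.mul (measurable_id.pow measurable_const)).ennreal_ofReal).aemeasurable
    have hm2 : AEMeasurable (fun t : ℝ => ENNReal.ofReal (t ^ (-α)))
        (volume.restrict (Ioo (0:ℝ) x)) :=
      ((measurable_id.pow measurable_const).ennreal_ofReal).aemeasurable
    have holder := ENNReal.lintegral_mul_le_Lp_mul_Lq (volume.restrict (Ioo (0:ℝ) x)) hpc hm1 hm2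
    rw [← h1] at holder
    have hfac1 : ∫⁻ t in Ioo (0:ℝ) x, (ENNReal.ofReal (f t * t ^ α)) ^ p = A x := by
      apply setLIntegral_congr_fun measurableSet_Ioo
      intro t ht
      beta_reduce
      rw [ENNReal.ofReal_rpow_of_nonneg (mul_nonneg (hf_nonneg t) (Real.rpow_nonneg ht.1.le _))
        hp0.le, Real.mul_rpow (hf_nonneg t) (Real.rpow_nonneg ht.1.le _),
        ← Real.rpow_mul ht.1.le, hαp]
    have hfac2 : ∫⁻ t in Ioo (0:ℝ) x, (ENNReal.ofReal (t ^ (-α))) ^ q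
        = ENNReal.ofReal (x ^ (1/q) * q) := by
      have heq : ∫⁻ t in Ioo (0:ℝ) x, (ENNReal.ofReal (t ^ (-α))) ^ q
          = ∫⁻ t in Ioo (0:ℝ) x, ENNReal.ofReal (t ^ (-(1/p))) := by
        apply setLIntegral_congr_fun measurableSet_Ioo
        intro t ht
        beta_reduce
        rw [ENNReal.ofReal_rpow_of_nonneg (Real.rpow_nonneg ht.1.le _) hq0.le,
          ← Real.rpow_mul ht.1.le, hαq]
      rw [heq, lint_rpow_Ioo (by linarith : (-1:ℝ) < -(1/p)) hx0]
      congr 1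
      have h2 : -(1/p) + 1 = 1/q := by rw [hqinv]; ring
      rw [h2, one_div q, div_eq_mul_inv, inv_inv]
    rw [hfac1, hfac2] at holder
    calc ENNReal.ofReal (x ^ (-p)) * (∫⁻ t in Ioo (0:ℝ) x, ENNReal.ofReal (f t)) ^ p
        ≤ ENNReal.ofReal (x ^ (-p)) *
            ((A x) ^ (1/p) * (ENNReal.ofReal (x ^ (1/q) * q)) ^ (1/q)) ^ p :=
          mul_le_mul_right (ENNReal.rpow_le_rpow holder hp0.le) _
      _ = ENNReal.ofReal (q ^ (p-1)) * (ENNReal.ofReal (x ^ e) * A x) := by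
          rw [ENNReal.mul_rpow_of_nonneg _ _ hp0.le, ← ENNReal.rpow_mul,
            ← ENNReal.rpow_mul, one_div_mul_cancel hp0.ne', ENNReal.rpow_one, hpq',
            ENNReal.ofReal_rpow_of_nonneg (by positivity) (by linarith : (0:ℝ) ≤ p - 1),
            Real.mul_rpow (Real.rpow_nonneg hx0.le _) hq0.le, ← Real.rpow_mul hx0.le]
          have hreal : ENNReal.ofReal (x ^ (-p)) * ENNReal.ofReal (x ^ (1/q*(p-1)) * q ^ (p-1))
              = ENNReal.ofReal (q ^ (p-1)) * ENNReal.ofReal (x ^ e) := by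
            rw [← ENNReal.ofReal_mul (Real.rpow_nonneg hx0.le _),
              ← ENNReal.ofReal_mul (Real.rpow_nonneg hq0.le _)]
            congr 1
            rw [show x ^ (-p) * (x ^ (1/q*(p-1)) * q ^ (p-1)) = q ^ (p-1) * (x ^ (-p) * x ^ (1/q*(p-1))) from by ring,
              ← Real.rpow_add hx0]
            congr 2
            rw [he_def]; ring
          calc ENNReal.ofReal (x ^ (-p)) * (A x * ENNReal.ofReal (x ^ (1/q*(p-1)) * q ^ (p-1)))
              = (ENNReal.ofReal (x ^ (-p)) * ENNReal.ofReal (x ^ (1/q*(p-1)) * q ^ (p-1))) * A x := by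
                ring
            _ = ENNReal.ofReal (q ^ (p-1)) * (ENNReal.ofReal (x ^ e) * A x) := by rw [hreal]; ring
  -- swap the double integral
  have hS : MeasurableSet {z : ℝ × ℝ | 0 < z.2 ∧ z.2 < z.1} :=
    (measurableSet_lt measurable_const measurable_snd).inter
      (measurableSet_lt measurable_snd measurable_fst)
  set K : ℝ × ℝ → ℝ≥0∞ := fun z => ({z : ℝ × ℝ | 0 < z.2 ∧ z.2 < z.1}).indicator
      (fun z => ENNReal.ofReal (z.1 ^ e) * c z.2) z with hK
  have hK_meas : Measurable K :=
    (((measurable_fst.pow measurable_const).ennreal_ofReal.mul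
      (hc_meas.comp measurable_snd)).indicator hS)
  have hAK : ∀ x, ENNReal.ofReal (x ^ e) * A x = ∫⁻ t, K (x, t) := by
    intro x
    have : ∀ t : ℝ, K (x, t) = (Ioo (0:ℝ) x).indicator (fun t => ENNReal.ofReal (x ^ e) * c t) t := by
      intro t
      simp only [hK, indicator, mem_setOf_eq, mem_Ioo]
    simp_rw [this]
    rw [lintegral_indicator measurableSet_Ioo,
      lintegral_const_mul' _ _ ENNReal.ofReal_ne_top]
  have hswap : ∫⁻ x in Ioi (0:ℝ), ENNReal.ofReal (x ^ e) * A x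
      = ∫⁻ t, ∫⁻ x in Ioi (0:ℝ), K (x, t) := by
    have h1 : ∫⁻ x in Ioi (0:ℝ), ENNReal.ofReal (x ^ e) * A x
        = ∫⁻ x in Ioi (0:ℝ), ∫⁻ t, K (x, t) := by
      apply lintegral_congr fun x => hAK x
    rw [h1]
    exact lintegral_lintegral_swap (by
      apply Measurable.aemeasurable
      exact hK_meas.comp (measurable_fst.prodMk measurable_snd))
  have hinner : ∀ t : ℝ, (∫⁻ x in Ioi (0:ℝ), K (x, t))
      = (Ioi (0:ℝ)).indicator (fun t => ENNReal.ofReal q * ENNReal.ofReal (f t ^ p)) t := by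
    intro t
    by_cases ht : 0 < t
    · rw [indicator_of_mem (show t ∈ Ioi (0:ℝ) from ht)]
      have hKt : ∀ x : ℝ, K (x, t) = (Ioi t).indicator (fun x => ENNReal.ofReal (x ^ e) * c t) x := by
        intro x
        simp only [hK, indicator, mem_setOf_eq, mem_Ioi, ht, true_and]
      simp_rw [hKt]
      rw [lintegral_indicator measurableSet_Ioi, Measure.restrict_restrict measurableSet_Ioi,
        inter_eq_left.mpr (Ioi_subset_Ioi ht.le),
        lintegral_mul_const' _ _ (by simp [hc] : c t ≠ ⊤), lint_rpow_Ioi he ht, he1]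
      have : t ^ (-(1/q)) / (-(-(1/q))) = t ^ (-(1/q)) * q := by
        rw [neg_neg, one_div q, div_eq_mul_inv, inv_inv]
      rw [this, hc]
      rw [← ENNReal.ofReal_mul (by positivity)]
      rw [← ENNReal.ofReal_mul (by positivity)]
      congr 1
      rw [show t ^ (-(1/q)) * q * (f t ^ p * t ^ (1/q)) = (t ^ (-(1/q)) * t ^ (1/q)) * (q * f t ^ p) by ring,
        ← Real.rpow_add ht, neg_add_cancel, Real.rpow_zero, one_mul]
    · rw [indicator_of_notMem (show t ∉ Ioi (0:ℝ) from by simpa using ht)]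
      have hKt : ∀ x : ℝ, K (x, t) = 0 := by
        intro x
        apply indicator_of_notMem
        simp only [mem_setOf_eq]
        tauto
      simp [hKt]
  -- assemble
  calc ∫⁻ x in Ioi (0:ℝ), ENNReal.ofReal (x ^ (-p)) * (∫⁻ t in Ioo (0:ℝ) x, ENNReal.ofReal (f t)) ^ p
      ≤ ∫⁻ x in Ioi (0:ℝ), ENNReal.ofReal (q ^ (p-1)) * (ENNReal.ofReal (x ^ e) * A x) := by
        apply lintegral_mono_ae
        filter_upwards [ae_restrict_mem measurableSet_Ioi] with x hx
        exact key x hx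
    _ = ENNReal.ofReal (q ^ (p-1)) * ∫⁻ x in Ioi (0:ℝ), ENNReal.ofReal (x ^ e) * A x :=
        lintegral_const_mul' _ _ ENNReal.ofReal_ne_top
    _ = ENNReal.ofReal (q ^ (p-1)) * ∫⁻ t, (Ioi (0:ℝ)).indicator
          (fun t => ENNReal.ofReal q * ENNReal.ofReal (f t ^ p)) t := by
        rw [hswap]
        congr 1
        exact lintegral_congr hinner
    _ = ENNReal.ofReal (q ^ (p-1)) * (ENNReal.ofReal q *
          ∫⁻ t in Ioi (0:ℝ), ENNReal.ofReal (f t ^ p)) := by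
        rw [lintegral_indicator measurableSet_Ioi,
          lintegral_const_mul' _ _ ENNReal.ofReal_ne_top]
    _ = ENNReal.ofReal (q ^ p) * ∫⁻ t in Ioi (0:ℝ), ENNReal.ofReal (f t ^ p) := by
        rw [← mul_assoc, ← ENNReal.ofReal_mul (by positivity)]
        congr 2
        rw [← Real.rpow_one q, ← Real.rpow_mul hq0.le, ← Real.rpow_add hq0]
        norm_num

theorem hardy_hilbert_abs_sub_kernel
    (p q lam r s : ℝ) (hp : 1 < p) (hpq : 1 / p + 1 / q = 1)
    (hlam0 : 0 < lam) (hlam1 : lam < 1)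
    (hr : 0 < r) (hs : 0 < s) (hrs : r + s = lam)
    (f g : ℝ → ℝ) (hf_meas : Measurable f) (hg_meas : Measurable g)
    (hf_nonneg : ∀ x, 0 ≤ f x) (hg_nonneg : ∀ x, 0 ≤ g x)
    (hf_int : IntegrableOn (fun x => f x ^ p) (Ioi (0:ℝ)))
    (hg_int : IntegrableOn (fun x => g x ^ q) (Ioi (0:ℝ)))
    (hf_pos : 0 < ∫ x in Ioi (0:ℝ), f x ^ p)
    (hg_pos : 0 < ∫ x in Ioi (0:ℝ), g x ^ q)
    (F G : ℝ → ℝ)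
    (hF : ∀ x, F x = ∫ t in (0:ℝ)..x, f t)
    (hG : ∀ y, G y = ∫ t in (0:ℝ)..y, g t) :
    ∫⁻ x in Ioi (0:ℝ), ∫⁻ y in Ioi (0:ℝ),
        ENNReal.ofReal (x ^ (r - 1 / q - 1) * y ^ (s - 1 / p - 1) * F x * G y / |x - y| ^ lam)
      ≤ ENNReal.ofReal (p * q * (betaFn r (1 - lam) + betaFn s (1 - lam)) *
          (∫ x in Ioi (0:ℝ), f x ^ p) ^ (1 / p) *
          (∫ x in Ioi (0:ℝ), g x ^ q) ^ (1 / q)) := by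
  have hpc : Real.HolderConjugate p q := Real.holderConjugate_iff.mpr ⟨hp, by rw [← one_div, ← one_div]; exact hpq⟩
  have hq : 1 < q := hpc.symm.lt
  have hp0 : 0 < p := by linarith
  have hq0 : 0 < q := by linarith
  have hsl : s < lam := by linarith
  have hrl : r < lam := by linarith
  -- shorthand
  set If : ℝ := ∫ x in Ioi (0:ℝ), f x ^ p with hIf
  set Ig : ℝ := ∫ x in Ioi (0:ℝ), g x ^ q with hIg
  set C₀ : ℝ := betaFn r (1 - lam) + betaFn s (1 - lam) with hC₀
  have hC₀0 : 0 ≤ C₀ := add_nonneg (betaFn_nonneg _ _) (betaFn_nonneg _ _)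
  set Φ : ℝ → ℝ≥0∞ := fun x => ∫⁻ t in Ioo (0:ℝ) x, ENNReal.ofReal (f t) with hΦ
  set Ψ : ℝ → ℝ≥0∞ := fun y => ∫⁻ t in Ioo (0:ℝ) y, ENNReal.ofReal (g t) with hΨ
  -- measurability of Φ, Ψ
  have hS : MeasurableSet {z : ℝ × ℝ | 0 < z.2 ∧ z.2 < z.1} :=
    (measurableSet_lt measurable_const measurable_snd).inter
      (measurableSet_lt measurable_snd measurable_fst)
  have hprim_meas : ∀ (h : ℝ → ℝ), Measurable h →
      Measurable (fun x => ∫⁻ t in Ioo (0:ℝ) x, ENNReal.ofReal (h t)) := by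
    intro h hm
    have heq : (fun x => ∫⁻ t in Ioo (0:ℝ) x, ENNReal.ofReal (h t))
        = fun x => ∫⁻ t, ({z : ℝ × ℝ | 0 < z.2 ∧ z.2 < z.1}.indicator
            (fun z => ENNReal.ofReal (h z.2)) (x, t)) := by
      funext x
      rw [← lintegral_indicator measurableSet_Ioo]
      apply lintegral_congr
      intro t
      by_cases hcond : 0 < t ∧ t < x
      · simp [indicator, mem_Ioo, mem_setOf_eq, hcond]
      · simp [indicator, mem_Ioo, mem_setOf_eq, hcond]
    rw [heq]
    exact Measurable.lintegral_prod_right' (((hm.comp measurable_snd).ennreal_ofReal).indicator hS)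
  have hΦ_meas : Measurable Φ := hprim_meas f hf_meas
  have hΨ_meas : Measurable Ψ := hprim_meas g hg_meas
  -- ofReal of primitives
  have hFΦ : ∀ x, 0 < x → ENNReal.ofReal (F x) = Φ x := by
    intro x hx0
    have hIoo : IntegrableOn f (Ioo 0 x) := by
      have hbound : IntegrableOn (fun t => 1 + f t ^ p) (Ioo 0 x) := by
        apply Integrable.add
        · exact (integrableOn_const_iff).mpr (Or.inr measure_Ioo_lt_top)
        · exact hf_int.mono_set (fun t ht => ht.1)
      apply Integrable.mono' hbound hf_meas.aestronglyMeasurable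
      filter_upwards with t
      rw [Real.norm_eq_abs, abs_of_nonneg (hf_nonneg t)]
      rcases le_or_gt (f t) 1 with h1 | h1
      · nlinarith [Real.rpow_nonneg (hf_nonneg t) p]
      · have h2 : f t ^ (1:ℝ) ≤ f t ^ p := Real.rpow_le_rpow_of_exponent_le h1.le hp.le
        rw [Real.rpow_one] at h2; linarith
    rw [hF x, intervalIntegral.integral_of_le hx0.le, integral_Ioc_eq_integral_Ioo,
      ofReal_integral_eq_lintegral_ofReal hIoo]
    filter_upwards with t
    exact hf_nonneg t
  have hGΨ : ∀ y, 0 < y → ENNReal.ofReal (G y) = Ψ y := by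
    intro y hy0
    have hIoo : IntegrableOn g (Ioo 0 y) := by
      have hbound : IntegrableOn (fun t => 1 + g t ^ q) (Ioo 0 y) := by
        apply Integrable.add
        · exact (integrableOn_const_iff).mpr (Or.inr measure_Ioo_lt_top)
        · exact hg_int.mono_set (fun t ht => ht.1)
      apply Integrable.mono' hbound hg_meas.aestronglyMeasurable
      filter_upwards with t
      rw [Real.norm_eq_abs, abs_of_nonneg (hg_nonneg t)]
      rcases le_or_gt (g t) 1 with h1 | h1
      · nlinarith [Real.rpow_nonneg (hg_nonneg t) q]
      · have h2 : g t ^ (1:ℝ) ≤ g t ^ q := Real.rpow_le_rpow_of_exponent_le h1.le hq.le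
        rw [Real.rpow_one] at h2; linarith
    rw [hG y, intervalIntegral.integral_of_le hy0.le, integral_Ioc_eq_integral_Ioo,
      ofReal_integral_eq_lintegral_ofReal hIoo]
    filter_upwards with t
    exact hg_nonneg t
  -- F, G nonneg
  have hF_nonneg : ∀ x, 0 < x → 0 ≤ F x := by
    intro x hx0
    rw [hF x]
    apply intervalIntegral.integral_nonneg hx0.le
    intro t _; exact hf_nonneg t
  have hG_nonneg : ∀ y, 0 < y → 0 ≤ G y := by
    intro y hy0
    rw [hG y]
    apply intervalIntegral.integral_nonneg hy0.le
    intro t _; exact hg_nonneg t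
  -- the two Hölder pieces
  set U : ℝ → ℝ → ℝ≥0∞ := fun x y =>
    (ENNReal.ofReal (x ^ ((r-p)/p)) * Φ x) *
      (ENNReal.ofReal (y ^ ((s-1)/p)) * ENNReal.ofReal (|x - y| ^ (-lam/p))) with hU
  set V : ℝ → ℝ → ℝ≥0∞ := fun x y =>
    (ENNReal.ofReal (x ^ ((r-1)/q)) * ENNReal.ofReal (y ^ ((s-q)/q))) *
      (Ψ y * ENNReal.ofReal (|x - y| ^ (-lam/q))) with hV
  have hUmeas : Measurable (fun z : ℝ × ℝ => U z.1 z.2) := by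
    simp only [hU]
    exact (((measurable_fst.pow measurable_const).ennreal_ofReal).mul
      (hΦ_meas.comp measurable_fst)).mul
      (((measurable_snd.pow measurable_const).ennreal_ofReal).mul
        (((measurable_fst.sub measurable_snd).abs.pow measurable_const).ennreal_ofReal))
  have hVmeas : Measurable (fun z : ℝ × ℝ => V z.1 z.2) := by
    simp only [hV]
    exact (((measurable_fst.pow measurable_const).ennreal_ofReal).mul
      ((measurable_snd.pow measurable_const).ennreal_ofReal)).mul
      ((hΨ_meas.comp measurable_snd).mul
        (((measurable_fst.sub measurable_snd).abs.pow measurable_const).ennreal_ofReal))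
  -- exponent identities
  have hexp : ∀ u : ℝ, u/p + u/q = u := by
    intro u
    rw [← mul_one_div u p, ← mul_one_div u q, ← mul_add, hpq, mul_one]
  have hxexp : (r-p)/p + (r-1)/q = r - 1/q - 1 := by
    have e1 : (r-p)/p = r/p - 1 := by rw [sub_div, div_self hp0.ne']
    have e2 : (r-1)/q = r/q - 1/q := by rw [sub_div]
    have e3 := hexp r
    linarith
  have hyexp : (s-1)/p + (s-q)/q = s - 1/p - 1 := by
    have e1 : (s-q)/q = s/q - 1 := by rw [sub_div, div_self hq0.ne']
    have e2 : (s-1)/p = s/p - 1/p := by rw [sub_div]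
    have e3 := hexp s
    linarith
  have hkexp : -lam/p + -lam/q = -lam := hexp (-lam)
  -- pointwise splitting
  have hsplit : ∀ x, 0 < x → ∀ y, 0 < y →
      ENNReal.ofReal (x ^ (r - 1 / q - 1) * y ^ (s - 1 / p - 1) * F x * G y / |x - y| ^ lam)
        = U x y * V x y := by
    intro x hx0 y hy0
    by_cases hxy : x = y
    · subst hxy
      have h0 : |x - x| = 0 := by simp
      rw [h0, Real.zero_rpow hlam0.ne', _root_.div_zero, ENNReal.ofReal_zero, hU, hV]
      simp only []
      rw [h0, Real.zero_rpow (div_ne_zero (neg_ne_zero.mpr hlam0.ne') hp0.ne')]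
      simp
    · have hk0 : 0 < |x - y| := abs_pos.mpr (sub_ne_zero.mpr hxy)
      have hxsplit : x ^ (r - 1/q - 1) = x ^ ((r-p)/p) * x ^ ((r-1)/q) := by
        rw [← Real.rpow_add hx0, hxexp]
      have hysplit : y ^ (s - 1/p - 1) = y ^ ((s-1)/p) * y ^ ((s-q)/q) := by
        rw [← Real.rpow_add hy0, hyexp]
      have hksplit : |x - y| ^ (-lam) = |x - y| ^ (-lam/p) * |x - y| ^ (-lam/q) := by
        rw [← Real.rpow_add hk0, hkexp]
      have hreal : x ^ (r - 1/q - 1) * y ^ (s - 1/p - 1) * F x * G y / |x - y| ^ lam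
          = (x ^ ((r-p)/p) * F x * (y ^ ((s-1)/p) * |x - y| ^ (-lam/p))) *
            (x ^ ((r-1)/q) * y ^ ((s-q)/q) * (G y * |x - y| ^ (-lam/q))) := by
        rw [div_eq_mul_inv, ← Real.rpow_neg (abs_nonneg _), hxsplit, hysplit, hksplit]
        ring
      have n1 : (0:ℝ) ≤ x ^ ((r-p)/p) := Real.rpow_nonneg hx0.le _
      have n2 : (0:ℝ) ≤ F x := hF_nonneg x hx0
      have n3 : (0:ℝ) ≤ y ^ ((s-1)/p) := Real.rpow_nonneg hy0.le _
      have n4 : (0:ℝ) ≤ |x - y| ^ (-lam/p) := Real.rpow_nonneg (abs_nonneg _) _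
      have n5 : (0:ℝ) ≤ x ^ ((r-1)/q) := Real.rpow_nonneg hx0.le _
      have n6 : (0:ℝ) ≤ y ^ ((s-q)/q) := Real.rpow_nonneg hy0.le _
      have n7 : (0:ℝ) ≤ G y := hG_nonneg y hy0
      have n8 : (0:ℝ) ≤ |x - y| ^ (-lam/q) := Real.rpow_nonneg (abs_nonneg _) _
      rw [hreal,
        ENNReal.ofReal_mul (mul_nonneg (mul_nonneg n1 n2) (mul_nonneg n3 n4)),
        ENNReal.ofReal_mul (mul_nonneg n1 n2), ENNReal.ofReal_mul n1,
        ENNReal.ofReal_mul n3, ENNReal.ofReal_mul (mul_nonneg n5 n6),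
        ENNReal.ofReal_mul n5, ENNReal.ofReal_mul n7,
        hU, hV]
      simp only []
      rw [hFΦ x hx0, hGΨ y hy0]
  -- factor U
  have hUp_meas : Measurable (fun z : ℝ × ℝ => U z.1 z.2 ^ p) := hUmeas.pow measurable_const
  have hVq_meas : Measurable (fun z : ℝ × ℝ => V z.1 z.2 ^ q) := hVmeas.pow measurable_const
  set M : Measure (ℝ × ℝ) := (volume.restrict (Ioi (0:ℝ))).prod (volume.restrict (Ioi (0:ℝ))) with hM
  have hIf0 : (0:ℝ) ≤ If := hf_pos.le
  have hIg0 : (0:ℝ) ≤ Ig := hg_pos.le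
  have hIfl : ∫⁻ t in Ioi (0:ℝ), ENNReal.ofReal (f t ^ p) = ENNReal.ofReal If := by
    rw [hIf, ofReal_integral_eq_lintegral_ofReal hf_int]
    filter_upwards with t
    exact Real.rpow_nonneg (hf_nonneg t) p
  have hIgl : ∫⁻ t in Ioi (0:ℝ), ENNReal.ofReal (g t ^ q) = ENNReal.ofReal Ig := by
    rw [hIg, ofReal_integral_eq_lintegral_ofReal hg_int]
    filter_upwards with t
    exact Real.rpow_nonneg (hg_nonneg t) q
  have hfacU : ∫⁻ z : ℝ × ℝ, U z.1 z.2 ^ p ∂M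
      ≤ ENNReal.ofReal C₀ * (ENNReal.ofReal (q ^ p) * ENNReal.ofReal If) := by
    have h1 : ∫⁻ z : ℝ × ℝ, U z.1 z.2 ^ p ∂M
        = ∫⁻ x in Ioi (0:ℝ), ∫⁻ y in Ioi (0:ℝ), U x y ^ p :=
      (lintegral_lintegral (f := fun x y => U x y ^ p) hUp_meas.aemeasurable).symm
    have hinner : ∀ x ∈ Ioi (0:ℝ), (∫⁻ y in Ioi (0:ℝ), U x y ^ p)
        = ENNReal.ofReal C₀ * (ENNReal.ofReal (x ^ (-p)) * Φ x ^ p) := by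
      intro x hx'
      have hx0 : (0:ℝ) < x := hx'
      have hstep : ∫⁻ y in Ioi (0:ℝ), U x y ^ p
          = ∫⁻ y in Ioi (0:ℝ), (ENNReal.ofReal (x ^ (r-p)) * Φ x ^ p) *
              ENNReal.ofReal (y ^ (s-1) * |x - y| ^ (-lam)) := by
        apply setLIntegral_congr_fun measurableSet_Ioi
        intro y hy'
        beta_reduce
        have hy0 : (0:ℝ) < y := hy'
        rw [hU]
        simp only []
        rw [ENNReal.mul_rpow_of_nonneg _ _ hp0.le, ENNReal.mul_rpow_of_nonneg _ _ hp0.le,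
          ENNReal.mul_rpow_of_nonneg _ _ hp0.le,
          ENNReal.ofReal_rpow_of_nonneg (Real.rpow_nonneg hx0.le _) hp0.le,
          ENNReal.ofReal_rpow_of_nonneg (Real.rpow_nonneg hy0.le _) hp0.le,
          ENNReal.ofReal_rpow_of_nonneg (Real.rpow_nonneg (abs_nonneg _) _) hp0.le,
          ← Real.rpow_mul hx0.le, ← Real.rpow_mul hy0.le, ← Real.rpow_mul (abs_nonneg _),
          div_mul_cancel₀ _ hp0.ne', div_mul_cancel₀ _ hp0.ne', div_mul_cancel₀ _ hp0.ne',
          ENNReal.ofReal_mul (Real.rpow_nonneg hy0.le _)]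
      rw [hstep, lintegral_const_mul _ (kernel_meas x), lint_kernel hs hsl hlam1 hx0]
      have h2 : lam - s = r := by linarith
      rw [h2]
      have h3 : betaFn s (1-lam) + betaFn r (1-lam) = C₀ := by rw [hC₀]; ring
      rw [h3]
      have h4 : ENNReal.ofReal (x ^ (r-p)) * ENNReal.ofReal (x ^ (s-lam))
          = ENNReal.ofReal (x ^ (-p)) := by
        rw [← ENNReal.ofReal_mul (Real.rpow_nonneg hx0.le _), ← Real.rpow_add hx0]
        congr 2
        linarith
      calc ENNReal.ofReal (x ^ (r-p)) * Φ x ^ p *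
            (ENNReal.ofReal (x ^ (s-lam)) * ENNReal.ofReal C₀)
          = (ENNReal.ofReal (x ^ (r-p)) * ENNReal.ofReal (x ^ (s-lam))) *
              (ENNReal.ofReal C₀ * Φ x ^ p) := by ring
        _ = ENNReal.ofReal C₀ * (ENNReal.ofReal (x ^ (-p)) * Φ x ^ p) := by rw [h4]; ring
    rw [h1]
    calc ∫⁻ x in Ioi (0:ℝ), ∫⁻ y in Ioi (0:ℝ), U x y ^ p
        = ∫⁻ x in Ioi (0:ℝ), ENNReal.ofReal C₀ * (ENNReal.ofReal (x ^ (-p)) * Φ x ^ p) := by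
          apply setLIntegral_congr_fun measurableSet_Ioi
          intro x hx
          beta_reduce
          exact hinner x hx
      _ = ENNReal.ofReal C₀ * ∫⁻ x in Ioi (0:ℝ), ENNReal.ofReal (x ^ (-p)) * Φ x ^ p :=
          lintegral_const_mul' _ _ ENNReal.ofReal_ne_top
      _ ≤ ENNReal.ofReal C₀ * (ENNReal.ofReal (q ^ p) *
            ∫⁻ t in Ioi (0:ℝ), ENNReal.ofReal (f t ^ p)) :=
          mul_le_mul_right (hardy p q hp hpq f hf_meas hf_nonneg) _
      _ = ENNReal.ofReal C₀ * (ENNReal.ofReal (q ^ p) * ENNReal.ofReal If) := by rw [hIfl]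
  have hfacV : ∫⁻ z : ℝ × ℝ, V z.1 z.2 ^ q ∂M
      ≤ ENNReal.ofReal C₀ * (ENNReal.ofReal (p ^ q) * ENNReal.ofReal Ig) := by
    have h1 : ∫⁻ z : ℝ × ℝ, V z.1 z.2 ^ q ∂M
        = ∫⁻ x in Ioi (0:ℝ), ∫⁻ y in Ioi (0:ℝ), V x y ^ q :=
      (lintegral_lintegral (f := fun x y => V x y ^ q) hVq_meas.aemeasurable).symm
    have h2 : ∫⁻ x in Ioi (0:ℝ), ∫⁻ y in Ioi (0:ℝ), V x y ^ q
        = ∫⁻ y in Ioi (0:ℝ), ∫⁻ x in Ioi (0:ℝ), V x y ^ q :=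
      lintegral_lintegral_swap (f := fun x y => V x y ^ q) hVq_meas.aemeasurable
    have hinner : ∀ y ∈ Ioi (0:ℝ), (∫⁻ x in Ioi (0:ℝ), V x y ^ q)
        = ENNReal.ofReal C₀ * (ENNReal.ofReal (y ^ (-q)) * Ψ y ^ q) := by
      intro y hy'
      have hy0 : (0:ℝ) < y := hy'
      have hstep : ∫⁻ x in Ioi (0:ℝ), V x y ^ q
          = ∫⁻ x in Ioi (0:ℝ), (ENNReal.ofReal (y ^ (s-q)) * Ψ y ^ q) *
              ENNReal.ofReal (x ^ (r-1) * |y - x| ^ (-lam)) := by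
        apply setLIntegral_congr_fun measurableSet_Ioi
        intro x hx'
        beta_reduce
        have hx0 : (0:ℝ) < x := hx'
        rw [hV]
        simp only []
        rw [ENNReal.mul_rpow_of_nonneg _ _ hq0.le, ENNReal.mul_rpow_of_nonneg _ _ hq0.le,
          ENNReal.mul_rpow_of_nonneg _ _ hq0.le,
          ENNReal.ofReal_rpow_of_nonneg (Real.rpow_nonneg hx0.le _) hq0.le,
          ENNReal.ofReal_rpow_of_nonneg (Real.rpow_nonneg hy0.le _) hq0.le,
          ENNReal.ofReal_rpow_of_nonneg (Real.rpow_nonneg (abs_nonneg _) _) hq0.le,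
          ← Real.rpow_mul hx0.le, ← Real.rpow_mul hy0.le, ← Real.rpow_mul (abs_nonneg _),
          div_mul_cancel₀ _ hq0.ne', div_mul_cancel₀ _ hq0.ne', div_mul_cancel₀ _ hq0.ne']
        rw [abs_sub_comm x y, ENNReal.ofReal_mul (Real.rpow_nonneg hx0.le _)]
        ring
      rw [hstep, lintegral_const_mul _ (kernel_meas y), lint_kernel hr hrl hlam1 hy0]
      have h3 : lam - r = s := by linarith
      rw [h3, ← hC₀]
      have h4 : ENNReal.ofReal (y ^ (s-q)) * ENNReal.ofReal (y ^ (r-lam))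
          = ENNReal.ofReal (y ^ (-q)) := by
        rw [← ENNReal.ofReal_mul (Real.rpow_nonneg hy0.le _), ← Real.rpow_add hy0]
        congr 2
        linarith
      calc ENNReal.ofReal (y ^ (s-q)) * Ψ y ^ q *
            (ENNReal.ofReal (y ^ (r-lam)) * ENNReal.ofReal C₀)
          = (ENNReal.ofReal (y ^ (s-q)) * ENNReal.ofReal (y ^ (r-lam))) *
              (ENNReal.ofReal C₀ * Ψ y ^ q) := by ring
        _ = ENNReal.ofReal C₀ * (ENNReal.ofReal (y ^ (-q)) * Ψ y ^ q) := by rw [h4]; ring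
    rw [h1, h2]
    calc ∫⁻ y in Ioi (0:ℝ), ∫⁻ x in Ioi (0:ℝ), V x y ^ q
        = ∫⁻ y in Ioi (0:ℝ), ENNReal.ofReal C₀ * (ENNReal.ofReal (y ^ (-q)) * Ψ y ^ q) := by
          apply setLIntegral_congr_fun measurableSet_Ioi
          intro y hy
          beta_reduce
          exact hinner y hy
      _ = ENNReal.ofReal C₀ * ∫⁻ y in Ioi (0:ℝ), ENNReal.ofReal (y ^ (-q)) * Ψ y ^ q :=
          lintegral_const_mul' _ _ ENNReal.ofReal_ne_top
      _ ≤ ENNReal.ofReal C₀ * (ENNReal.ofReal (p ^ q) *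
            ∫⁻ t in Ioi (0:ℝ), ENNReal.ofReal (g t ^ q)) :=
          mul_le_mul_right (hardy q p hq (by linarith) g hg_meas hg_nonneg) _
      _ = ENNReal.ofReal C₀ * (ENNReal.ofReal (p ^ q) * ENNReal.ofReal Ig) := by rw [hIgl]
  -- final assembly
  have hqq : (q ^ p) ^ (1/p) = q := by
    rw [← Real.rpow_mul hq0.le, mul_one_div_cancel hp0.ne', Real.rpow_one]
  have hpp : (p ^ q) ^ (1/q) = p := by
    rw [← Real.rpow_mul hp0.le, mul_one_div_cancel hq0.ne', Real.rpow_one]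
  have hCC : C₀ ^ (1/p) * C₀ ^ (1/q) = C₀ := by
    rw [← Real.rpow_add' hC₀0 (by rw [hpq]; exact one_ne_zero), hpq, Real.rpow_one]
  calc ∫⁻ x in Ioi (0:ℝ), ∫⁻ y in Ioi (0:ℝ),
        ENNReal.ofReal (x ^ (r - 1 / q - 1) * y ^ (s - 1 / p - 1) * F x * G y / |x - y| ^ lam)
      = ∫⁻ x in Ioi (0:ℝ), ∫⁻ y in Ioi (0:ℝ), U x y * V x y := by
        apply setLIntegral_congr_fun measurableSet_Ioi
        intro x hx
        beta_reduce
        apply setLIntegral_congr_fun measurableSet_Ioi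
        intro y hy
        beta_reduce
        exact hsplit x hx y hy
    _ = ∫⁻ z : ℝ × ℝ, U z.1 z.2 * V z.1 z.2 ∂M :=
        lintegral_lintegral (f := fun x y => U x y * V x y) (hUmeas.mul hVmeas).aemeasurable
    _ ≤ (∫⁻ z : ℝ × ℝ, U z.1 z.2 ^ p ∂M) ^ (1/p) * (∫⁻ z : ℝ × ℝ, V z.1 z.2 ^ q ∂M) ^ (1/q) := by
        have h := ENNReal.lintegral_mul_le_Lp_mul_Lq M hpc
          ((hUmeas.comp (measurable_fst.prodMk measurable_snd)).aemeasurable)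
          ((hVmeas.comp (measurable_fst.prodMk measurable_snd)).aemeasurable)
        simpa [Pi.mul_apply] using h
    _ ≤ (ENNReal.ofReal C₀ * (ENNReal.ofReal (q ^ p) * ENNReal.ofReal If)) ^ (1/p) *
          (ENNReal.ofReal C₀ * (ENNReal.ofReal (p ^ q) * ENNReal.ofReal Ig)) ^ (1/q) :=
        mul_le_mul' (ENNReal.rpow_le_rpow hfacU (by positivity))
          (ENNReal.rpow_le_rpow hfacV (by positivity))
    _ = ENNReal.ofReal (p * q * C₀ * If ^ (1/p) * Ig ^ (1/q)) := by
        rw [← ENNReal.ofReal_mul (Real.rpow_nonneg hq0.le _),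
          ← ENNReal.ofReal_mul hC₀0,
          ← ENNReal.ofReal_mul (Real.rpow_nonneg hp0.le _),
          ← ENNReal.ofReal_mul hC₀0,
          ENNReal.ofReal_rpow_of_nonneg (mul_nonneg hC₀0 (mul_nonneg (Real.rpow_nonneg hq0.le _) hIf0)) (by positivity : (0:ℝ) ≤ 1/p),
          ENNReal.ofReal_rpow_of_nonneg (mul_nonneg hC₀0 (mul_nonneg (Real.rpow_nonneg hp0.le _) hIg0)) (by positivity : (0:ℝ) ≤ 1/q),
          ← ENNReal.ofReal_mul (Real.rpow_nonneg (mul_nonneg hC₀0 (mul_nonneg (Real.rpow_nonneg hq0.le _) hIf0)) _)]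
        congr 1
        rw [Real.mul_rpow hC₀0 (mul_nonneg (Real.rpow_nonneg hq0.le _) hIf0),
          Real.mul_rpow (Real.rpow_nonneg hq0.le _) hIf0,
          Real.mul_rpow hC₀0 (mul_nonneg (Real.rpow_nonneg hp0.le _) hIg0),
          Real.mul_rpow (Real.rpow_nonneg hp0.le _) hIg0, hqq, hpp]
        calc C₀ ^ (1/p) * (q * If ^ (1/p)) * (C₀ ^ (1/q) * (p * Ig ^ (1/q)))
            = (C₀ ^ (1/p) * C₀ ^ (1/q)) * (p * q * If ^ (1/p) * Ig ^ (1/q)) := by ring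
          _ = p * q * C₀ * If ^ (1/p) * Ig ^ (1/q) := by rw [hCC]; ring
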